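/- If Γ is a finite abelian group and a, b ∈ Γ, then the sumset Atom(a) + Atom(b) = { s + t : s ∈ Atom(a), t ∈ Atom(b) } belongs to B(Γ). -/

import Mathlib

open Pointwise

/-- The Boolean algebra of subsets of `Γ` generated by the subgroups of `Γ`. -/
inductive InB (Γ : Type*) [AddGroup Γ] : Set Γ → Prop
  | subgroup (H : AddSubgroup Γ) : InB Γ (H : Set Γ)
  | compl {S : Set Γ} : InB Γ S → InB Γ Sᶜ
  | union {S T : Set Γ} : InB Γ S → InB Γ T → InB Γ (S ∪ T)

/-- `Atom a` is the set of elements generating the same cyclic subgroup as `a`. -/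
def Atom {Γ : Type*} [AddGroup Γ] (a : Γ) : Set Γ :=
  {b | AddSubgroup.zmultiples a = AddSubgroup.zmultiples b}

section Aux

variable {Γ : Type*} [AddGroup Γ]

lemma InB.empty : InB Γ (∅ : Set Γ) := by
  have h := (InB.subgroup (⊤ : AddSubgroup Γ)).compl
  simpa using h

lemma InB.inter {S T : Set Γ} (hS : InB Γ S) (hT : InB Γ T) : InB Γ (S ∩ T) := by
  have h := (hS.compl.union hT.compl).compl
  simpa [Set.compl_union] using h

lemma InB.iUnion {ι : Type*} [Fintype ι] (f : ι → Set Γ) (h : ∀ i, InB Γ (f i)) :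
    InB Γ (⋃ i, f i) := by
  classical
  have : ∀ s : Finset ι, InB Γ (⋃ i ∈ s, f i) := by
    intro s
    induction s using Finset.induction with
    | empty => simpa using InB.empty
    | insert _ _ hx ih =>
      rw [Finset.set_biUnion_insert]
      exact (h _).union ih
  have h2 := this Finset.univ
  simpa using h2

lemma atom_mem_B [Fintype Γ] (x : Γ) : InB Γ (Atom x) := by
  classical
  have key : Atom x = (AddSubgroup.zmultiples x : Set Γ) ∩
      (⋃ y : Γ, if AddSubgroup.zmultiples y < AddSubgroup.zmultiples x
        then (AddSubgroup.zmultiples y : Set Γ) else ∅)ᶜ := by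
    ext b
    simp only [Atom, Set.mem_setOf_eq, Set.mem_inter_iff, Set.mem_compl_iff, Set.mem_iUnion,
      not_exists]
    constructor
    · intro hb
      refine ⟨by rw [hb]; exact AddSubgroup.mem_zmultiples b, ?_⟩
      intro y
      split_ifs with hy
      · intro hby
        have : AddSubgroup.zmultiples b ≤ AddSubgroup.zmultiples y :=
          (AddSubgroup.zmultiples_le).2 hby
        exact absurd (lt_of_le_of_lt this hy) (by rw [hb]; exact lt_irrefl _)
      · exact Set.notMem_empty b
    · rintro ⟨hb1, hb2⟩
      have hle : AddSubgroup.zmultiples b ≤ AddSubgroup.zmultiples x :=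
        (AddSubgroup.zmultiples_le).2 hb1
      rcases lt_or_eq_of_le hle with hlt | heq
      · have := hb2 b
        rw [if_pos hlt] at this
        exact absurd (AddSubgroup.mem_zmultiples b) this
      · exact heq.symm
  rw [key]
  refine (InB.subgroup _).inter (InB.compl ?_)
  refine InB.iUnion _ fun y => ?_
  split_ifs
  · exact InB.subgroup _
  · exact InB.empty

end Aux

section Key

variable {Γ : Type*} [AddCommGroup Γ] [Fintype Γ]

/-- If `m` is coprime to the group order, `m • x` generates the same subgroup as `x`. -/
lemma zmultiples_nsmul_eq (m : ℕ) (hm : Nat.Coprime m (Fintype.card Γ)) (x : Γ) :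
    AddSubgroup.zmultiples (m • x) = AddSubgroup.zmultiples x := by
  apply le_antisymm
  · exact (AddSubgroup.zmultiples_le).2 ⟨(m : ℤ), by simp⟩
  · refine (AddSubgroup.zmultiples_le).2 ?_
    -- need x ∈ zmultiples (m • x)
    set d := addOrderOf x with hd
    have hdvd : d ∣ Fintype.card Γ := addOrderOf_dvd_card
    have hcop : Nat.Coprime m d := Nat.Coprime.coprime_dvd_right hdvd hm
    rcases Nat.eq_zero_or_pos d with h0 | hdpos
    · exact absurd (hd ▸ h0 : addOrderOf x = 0) (addOrderOf_pos x).ne'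
    rcases Nat.lt_or_ge 1 d with hd1 | hd1
    · obtain ⟨c, -, hc⟩ := Nat.exists_mul_mod_eq_one_of_coprime hcop hd1
      refine ⟨(c : ℤ), ?_⟩
      have : (c * m) • x = x := by
        rw [← mod_addOrderOf_nsmul x (c * m), ← hd, mul_comm c m, hc, one_nsmul]
      calc (c : ℤ) • (m • x) = (c * m) • x := by
            rw [natCast_zsmul, smul_smul]
        _ = x := this
    · have hd1' : d = 1 := le_antisymm hd1 hdpos
      have hx : x = 0 := AddMonoid.addOrderOf_eq_one_iff.1 hd1'
      simp [hx]

/-- If `u` and `v` generate the same subgroup, then `v = m • u` for some `m`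
coprime to the group order. -/
lemma exists_coprime_nsmul {u v : Γ}
    (h : AddSubgroup.zmultiples u = AddSubgroup.zmultiples v) :
    ∃ m : ℕ, Nat.Coprime m (Fintype.card Γ) ∧ v = m • u := by
  classical
  set d := addOrderOf u with hdef
  set N := Fintype.card Γ with hN
  have hNpos : 0 < N := Fintype.card_pos
  have : NeZero N := ⟨hNpos.ne'⟩
  have hdvd : d ∣ N := addOrderOf_dvd_card
  obtain ⟨k, hk⟩ : ∃ k : ℤ, k • u = v := by
    have : v ∈ AddSubgroup.zmultiples u := h ▸ AddSubgroup.mem_zmultiples v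
    exact AddSubgroup.mem_zmultiples_iff.1 this
  obtain ⟨l, hl⟩ : ∃ l : ℤ, l • v = u := by
    have : u ∈ AddSubgroup.zmultiples v := h ▸ AddSubgroup.mem_zmultiples u
    exact AddSubgroup.mem_zmultiples_iff.1 this
  have hlk : (l * k) • u = u := by rw [mul_smul, hk, hl]
  have hdd : (d : ℤ) ∣ l * k - 1 := by
    rw [hdef]
    rw [addOrderOf_dvd_iff_zsmul_eq_zero]
    rw [sub_smul, hlk, one_smul, sub_self]
  have hunit : IsUnit ((k : ZMod d)) := by
    refine IsUnit.of_mul_eq_one ((l : ZMod d)) ?_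
    have : ((l * k : ℤ) : ZMod d) = 1 := by
      have h2 := (ZMod.intCast_zmod_eq_zero_iff_dvd (l * k - 1) d).2 hdd
      rwa [Int.cast_sub, Int.cast_one, sub_eq_zero] at h2
    push_cast at this
    rw [mul_comm] at this
    simpa using this
  obtain ⟨w, hw⟩ := ZMod.unitsMap_surjective hdvd hunit.unit
  refine ⟨(w : ZMod N).val, ZMod.val_coe_unit_coprime w, ?_⟩
  have hcast : (((w : ZMod N).val : ℤ) : ZMod d) = ((k : ℤ) : ZMod d) := by
    have h1 : ((ZMod.unitsMap hdvd w : ZMod d)) = (k : ZMod d) := by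
      rw [hw]; rfl
    have h2 : ((ZMod.unitsMap hdvd w : ZMod d)) = ZMod.castHom hdvd (ZMod d) (w : ZMod N) := rfl
    have h3 : (((w : ZMod N).val : ℕ) : ZMod d) = ZMod.castHom hdvd (ZMod d) (w : ZMod N) := by
      rw [ZMod.castHom_apply, ← ZMod.natCast_val, ZMod.natCast_val]
    push_cast
    rw [h3, ← h2, h1]
  have hmod : (d : ℤ) ∣ ((w : ZMod N).val : ℤ) - k := by
    rw [ZMod.intCast_eq_intCast_iff] at hcast
    exact hcast.symm.dvd
  have : (((w : ZMod N).val : ℤ)) • u = k • u := by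
    have : ((((w : ZMod N).val : ℤ)) - k) • u = 0 := by
      rw [← addOrderOf_dvd_iff_zsmul_eq_zero]; exact hmod
    rw [sub_smul, sub_eq_zero] at this
    exact this
  rw [← hk, ← this, natCast_zsmul]

end Key

theorem atom_add_atom_mem_B {Γ : Type*} [AddCommGroup Γ] [Fintype Γ] (a b : Γ) :
    InB Γ (Atom a + Atom b) := by
  classical
  set S := Atom a + Atom b with hS
  have hsat : ∀ u ∈ S, Atom u ⊆ S := by
    rintro u ⟨s, hs, t, ht, rfl⟩ v hv
    obtain ⟨m, hm, rfl⟩ := exists_coprime_nsmul hv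
    rw [smul_add]
    refine ⟨m • s, ?_, m • t, ?_, rfl⟩
    · show AddSubgroup.zmultiples a = _
      rw [zmultiples_nsmul_eq m hm]; exact hs
    · show AddSubgroup.zmultiples b = _
      rw [zmultiples_nsmul_eq m hm]; exact ht
  have key : S = ⋃ u : Γ, if u ∈ S then Atom u else ∅ := by
    ext x
    simp only [Set.mem_iUnion]
    constructor
    · intro hx
      exact ⟨x, by rw [if_pos hx]; exact rfl⟩
    · rintro ⟨u, hu⟩
      split_ifs at hu with h
      · exact hsat u h hu
      · exact absurd hu (Set.notMem_empty x)
  rw [key]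
  refine InB.iUnion _ fun u => ?_
  split_ifs
  · exact atom_mem_B u
  · exact InB.empty
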